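/- For every n ≥ 1 and every y^n ∈ 𝒴^n, there exists a finite family of pairwise disjoint open rectangles I_r × J_r (products of open subintervals of (0,1)) whose union equals the fundamental set u_n(y^n) up to a Lebesgue-null set, and such that the set of distinct θ-axis intervals {I_r} appearing in the family has cardinality at most n(|𝒳|−1)+1. -/

import Mathlib

open MeasureTheory ProbabilityTheory Filter

/-- The left endpoint of the `j`-th partition interval: the cumulative mass of the indices
preceding `j`.  The `j`-th open interval of the partition is `(cum p j, cum p j + p j)`. -/
noncomputable def cum {m : ℕ} (p : Fin m → ℝ) (j : Fin m) : ℝ :=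
  ∑ j' ∈ Finset.univ.filter (fun j' => j' < j), p j'

/-- The trajectory predicate of the two-dimensional dynamical source: `θs, φs, xs, zs` witness
a well-defined `n`-step evolution from the initial state `(θ, φ)` (every iterate lies in the
interior of its partition interval) producing the source word `y`. -/
def traj {a b c : ℕ} (PX : Fin a → ℝ) (PZ : Fin c → ℝ) (ξ : Fin a × Fin c → Fin b)
    (T0 : ℝ → Fin b → ℝ) (T1 : ℝ → ℝ) (n : ℕ) (y : ℕ → Fin b) (θ φ : ℝ)
    (θs φs : ℕ → ℝ) (xs : ℕ → Fin a) (zs : ℕ → Fin c) : Prop :=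
  θs 0 = θ ∧ φs 0 = φ ∧ ∀ k < n,
    θs k ∈ Set.Ioo (cum PX (xs k)) (cum PX (xs k) + PX (xs k)) ∧
    φs k ∈ Set.Ioo (cum PZ (zs k)) (cum PZ (zs k) + PZ (zs k)) ∧
    ξ (xs k, zs k) = y k ∧
    θs (k + 1) = T0 (θs k) (y k) ∧
    φs (k + 1) = T1 (φs k)

/-- The fundamental set `u_n(y^n)` of the two-dimensional dynamical source: all initial states
`(θ, φ)` in the open unit square whose `n`-step evolution is well defined and produces the
source word `y`. -/
def fund {a b c : ℕ} (PX : Fin a → ℝ) (PZ : Fin c → ℝ) (ξ : Fin a × Fin c → Fin b)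
    (T0 : ℝ → Fin b → ℝ) (T1 : ℝ → ℝ) (n : ℕ) (y : ℕ → Fin b) : Set (ℝ × ℝ) :=
  {q | ∃ θs φs xs zs, traj PX PZ ξ T0 T1 n y q.1 q.2 θs φs xs zs}

lemma cum_eq {m : ℕ} (p : Fin m → ℝ) (j : Fin m) : cum p j = ∑ j' ∈ Finset.Iio j, p j' := by
  unfold cum; congr 1; ext j'; simp

lemma cum_nonneg {m : ℕ} {p : Fin m → ℝ} (hp : ∀ j, 0 ≤ p j) (j : Fin m) : 0 ≤ cum p j :=
  Finset.sum_nonneg fun j' _ => hp j'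

lemma cum_add_eq {m : ℕ} (p : Fin m → ℝ) (j : Fin m) :
    cum p j + p j = ∑ j' ∈ Finset.Iic j, p j' := by
  rw [cum_eq, ← Finset.Iio_insert, Finset.sum_insert (by simp)]; ring

lemma cum_add_le_cum {m : ℕ} {p : Fin m → ℝ} (hp : ∀ j, 0 ≤ p j) {i i' : Fin m}
    (h : i < i') : cum p i + p i ≤ cum p i' := by
  rw [cum_add_eq, cum_eq]
  exact Finset.sum_le_sum_of_subset_of_nonneg
    (fun j hj => by simp at *; omega) (fun j _ _ => hp j)

lemma cum_add_le_one {m : ℕ} {p : Fin m → ℝ} (hp : ∀ j, 0 ≤ p j)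
    (hsum : ∑ j, p j = 1) (i : Fin m) : cum p i + p i ≤ 1 := by
  rw [cum_add_eq, ← hsum]
  exact Finset.sum_le_sum_of_subset_of_nonneg (Finset.subset_univ _) (fun j _ _ => hp j)

lemma piece_subset {m : ℕ} {p : Fin m → ℝ} (hp : ∀ j, 0 ≤ p j)
    (hsum : ∑ j, p j = 1) (i : Fin m) :
    Set.Ioo (cum p i) (cum p i + p i) ⊆ Set.Ioo (0:ℝ) 1 := by
  intro t ht
  exact ⟨lt_of_le_of_lt (cum_nonneg hp i) ht.1, lt_of_lt_of_le ht.2 (cum_add_le_one hp hsum i)⟩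

lemma index_le {m : ℕ} {p : Fin m → ℝ} (hp : ∀ j, 0 ≤ p j) {i i' : Fin m} {t t' : ℝ}
    (ht : t ∈ Set.Ioo (cum p i) (cum p i + p i))
    (ht' : t' ∈ Set.Ioo (cum p i') (cum p i' + p i')) (htt : t ≤ t') : i ≤ i' := by
  by_contra h
  push_neg at h
  have := cum_add_le_cum hp h
  have h1 := ht.1; have h2 := ht.2; have h3 := ht'.1; have h4 := ht'.2
  linarith

lemma index_eq {m : ℕ} {p : Fin m → ℝ} (hp : ∀ j, 0 ≤ p j) {i i' : Fin m} {t : ℝ}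
    (ht : t ∈ Set.Ioo (cum p i) (cum p i + p i))
    (ht' : t ∈ Set.Ioo (cum p i') (cum p i' + p i')) : i = i' :=
  le_antisymm (index_le hp ht ht' le_rfl) (index_le hp ht' ht le_rfl)
open MeasureTheory

/-- iterate of a step-dependent map -/
def iterF (F : ℕ → ℝ → ℝ) : ℕ → ℝ → ℝ
  | 0, t => t
  | k+1, t => F k (iterF F k t)

/-- iterate of step-dependent affine maps -/
def iterA (C d s : ℕ → ℝ) : ℕ → ℝ → ℝ
  | 0, t => t
  | k+1, t => C k + (iterA C d s k t - d k) * s k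

lemma iterA_continuous (C d s : ℕ → ℝ) (k : ℕ) : Continuous (iterA C d s k) := by
  induction k with
  | zero => exact continuous_id
  | succ k ih =>
    show Continuous fun t => C k + (iterA C d s k t - d k) * s k
    fun_prop

lemma iterA_mono (C d s : ℕ → ℝ) (hs : ∀ k, 0 ≤ s k) (k : ℕ) : Monotone (iterA C d s k) := by
  induction k with
  | zero => exact monotone_id
  | succ k ih =>
    intro t t' htt
    show C k + (iterA C d s k t - d k) * s k ≤ C k + (iterA C d s k t' - d k) * s k
    have := ih htt
    nlinarith [hs k]

lemma pieceSet_open (C d s : ℕ → ℝ) (lo hi : ℕ → ℝ) (n : ℕ) :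
    IsOpen {t : ℝ | ∀ k < n, iterA C d s k t ∈ Set.Ioo (lo k) (hi k)} := by
  have : {t : ℝ | ∀ k < n, iterA C d s k t ∈ Set.Ioo (lo k) (hi k)}
      = ⋂ k ∈ Finset.range n, (iterA C d s k) ⁻¹' (Set.Ioo (lo k) (hi k)) := by
    ext t; simp
  rw [this]
  exact isOpen_biInter_finset fun k _ => isOpen_Ioo.preimage (iterA_continuous C d s k)

lemma pieceSet_ordConnected (C d s : ℕ → ℝ) (hs : ∀ k, 0 ≤ s k) (lo hi : ℕ → ℝ) (n : ℕ) :
    Set.OrdConnected {t : ℝ | ∀ k < n, iterA C d s k t ∈ Set.Ioo (lo k) (hi k)} := by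
  constructor
  intro t ht t' ht' z hz k hk
  exact ⟨lt_of_lt_of_le (ht k hk).1 (iterA_mono C d s hs k hz.1),
    lt_of_le_of_lt (iterA_mono C d s hs k hz.2) (ht' k hk).2⟩

lemma exists_Ioo_of_open_ordConnected {S : Set ℝ} (ho : IsOpen S) (hc : S.OrdConnected)
    (hb : S ⊆ Set.Ioo 0 1) : ∃ u v : ℝ, S = Set.Ioo u v := by
  rcases S.eq_empty_or_nonempty with h | h
  · exact ⟨0, 0, by simp [h]⟩
  refine ⟨sInf S, sSup S, ?_⟩
  have hbdd : BddBelow S := ⟨0, fun t ht => (hb ht).1.le⟩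
  have hbdd' : BddAbove S := ⟨1, fun t ht => (hb ht).2.le⟩
  ext t
  constructor
  · intro ht
    obtain ⟨ε, hε, hball⟩ := Metric.isOpen_iff.1 ho t ht
    have h1 : t - ε / 2 ∈ S := by
      apply hball
      rw [Metric.mem_ball, Real.dist_eq, abs_of_nonpos (by linarith)]
      linarith
    have h2 : t + ε / 2 ∈ S := by
      apply hball
      rw [Metric.mem_ball, Real.dist_eq, abs_of_pos (by linarith)]
      linarith
    constructor
    · exact lt_of_le_of_lt (csInf_le hbdd h1) (by linarith)
    · exact lt_of_lt_of_le (by linarith) (le_csSup hbdd' h2)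
  · intro ht
    obtain ⟨u, hu, hut⟩ := exists_lt_of_csInf_lt h ht.1
    obtain ⟨v, hv, htv⟩ := exists_lt_of_lt_csSup h ht.2
    exact hc.out hu hv ⟨hut.le, htv.le⟩

lemma chain_card {n a : ℕ} (ha : 1 ≤ a) (S : Set (Fin n → Fin a))
    (hch : ∀ v ∈ S, ∀ w ∈ S, v ≤ w ∨ w ≤ v) : S.ncard ≤ n * (a - 1) + 1 := by
  classical
  set f : (Fin n → Fin a) → ℕ := fun v => ∑ k, (v k : ℕ) with hf
  have key : ∀ v w : Fin n → Fin a, v ≤ w → f v = f w → v = w := by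
    intro v w hvw hfvw
    funext k
    by_contra hk
    have hlt : (v k : ℕ) < (w k : ℕ) := by
      have := lt_of_le_of_ne (hvw k) hk
      exact_mod_cast this
    have : f v < f w := Finset.sum_lt_sum (fun i _ => by exact_mod_cast hvw i)
      ⟨k, Finset.mem_univ k, hlt⟩
    omega
  have hinj : Set.InjOn f S := by
    intro v hv w hw hvw
    rcases hch v hv w hw with h | h
    · exact key v w h hvw
    · exact (key w v h hvw.symm).symm
  have h1 : S.ncard = (f '' S).ncard := (Set.ncard_image_of_injOn hinj).symm
  have h2 : f '' S ⊆ ↑(Finset.Iic (n * (a - 1))) := by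
    rintro _ ⟨v, _, rfl⟩
    simp only [Finset.coe_Iic, Set.mem_Iic]
    calc f v ≤ ∑ _k : Fin n, (a - 1) := Finset.sum_le_sum fun k _ => by
            have := (v k).isLt; omega
      _ = n * (a - 1) := by simp [Finset.sum_const, mul_comm]
  calc S.ncard = (f '' S).ncard := h1
    _ ≤ (↑(Finset.Iic (n * (a - 1))) : Set ℕ).ncard := Set.ncard_le_ncard h2 (Finset.finite_toSet _)
    _ = n * (a - 1) + 1 := by rw [Set.ncard_coe_finset, Nat.card_Iic]

lemma T0_mono {a b : ℕ} (PXY : Fin a × Fin b → ℝ) (hPXY0 : ∀ q, 0 ≤ PXY q)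
    (PX : Fin a → ℝ) (hPX0 : ∀ i, 0 ≤ PX i)
    (PY : Fin b → ℝ) (hPY : ∀ k, PY k = ∑ i, PXY (i, k))
    (T0 : ℝ → Fin b → ℝ)
    (hT0 : ∀ (k : Fin b) (i : Fin a), 0 < PX i →
      ∀ θ ∈ Set.Icc (cum PX i) (cum PX i + PX i),
        T0 θ k = (∑ i' ∈ Finset.univ.filter (fun i' => i' < i), PXY (i', k)) / PY k
          + (θ - cum PX i) * (PXY (i, k) / (PY k * PX i)))
    (m : Fin b) {i i' : Fin a} {t t' : ℝ}
    (hi : 0 < PX i) (hi' : 0 < PX i')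
    (ht : t ∈ Set.Icc (cum PX i) (cum PX i + PX i))
    (ht' : t' ∈ Set.Icc (cum PX i') (cum PX i' + PX i'))
    (htt : t ≤ t') : T0 t m ≤ T0 t' m := by
  set Q : Fin a → ℝ := fun j => PXY (j, m) with hQ
  have hQ0 : ∀ j, 0 ≤ Q j := fun j => hPXY0 _
  have hQcum : ∀ j : Fin a,
      (∑ i' ∈ Finset.univ.filter (fun i' => i' < j), PXY (i', m)) = cum Q j := fun j => rfl
  have hPY0 : 0 ≤ PY m := by rw [hPY]; exact Finset.sum_nonneg fun _ _ => hPXY0 _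
  rcases lt_trichotomy i i' with hlt | heq | hgt
  · -- i < i'
    rw [hT0 m i hi t ht, hT0 m i' hi' t' ht', hQcum, hQcum]
    rcases eq_or_lt_of_le hPY0 with hPYz | hPYp
    · simp [← hPYz, div_zero]
    have hs : 0 ≤ Q i / (PY m * PX i) :=
      div_nonneg (hQ0 i) (mul_nonneg hPY0 hi.le)
    have hs' : 0 ≤ Q i' / (PY m * PX i') :=
      div_nonneg (hQ0 i') (mul_nonneg hPY0 hi'.le)
    have h1 : (t - cum PX i) * (Q i / (PY m * PX i)) ≤ PX i * (Q i / (PY m * PX i)) :=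
      mul_le_mul_of_nonneg_right (by have := ht.2; linarith) hs
    have h2 : PX i * (Q i / (PY m * PX i)) = Q i / PY m := by
      field_simp
    have h3 : cum Q i / PY m + Q i / PY m ≤ cum Q i' / PY m := by
      rw [← add_div]
      gcongr
      exact cum_add_le_cum hQ0 hlt
    have h4 : 0 ≤ (t' - cum PX i') * (Q i' / (PY m * PX i')) :=
      mul_nonneg (by have := ht'.1; linarith) hs'
    linarith
  · -- i = i'
    subst heq
    rw [hT0 m i hi t ht, hT0 m i hi t' ht']
    have hs : 0 ≤ PXY (i, m) / (PY m * PX i) :=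
      div_nonneg (hPXY0 _) (mul_nonneg hPY0 hi.le)
    have := mul_le_mul_of_nonneg_right (sub_le_sub_right htt (cum PX i)) hs
    linarith
  · -- i' < i : forces t = t'
    have hc := cum_add_le_cum hPX0 hgt
    have : t = t' := le_antisymm htt (by have := ht.1; have := ht'.2; linarith)
    rw [this]

lemma iterF_zero (F : ℕ → ℝ → ℝ) (t : ℝ) : iterF F 0 t = t := rfl
lemma iterF_succ (F : ℕ → ℝ → ℝ) (k : ℕ) (t : ℝ) : iterF F (k+1) t = F k (iterF F k t) := rfl
lemma iterA_zero (C d s : ℕ → ℝ) (t : ℝ) : iterA C d s 0 t = t := rfl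
lemma iterA_succ (C d s : ℕ → ℝ) (k : ℕ) (t : ℝ) :
    iterA C d s (k+1) t = C k + (iterA C d s k t - d k) * s k := rfl

/-- the set of initial states whose `θ`-trajectory follows the symbol sequence `x`. -/
def thetaSet {a b : ℕ} (PX : Fin a → ℝ) (T0 : ℝ → Fin b → ℝ) (y : ℕ → Fin b)
    (n : ℕ) (x : ℕ → Fin a) : Set ℝ :=
  {θ | ∀ k < n, iterF (fun k t => T0 t (y k)) k θ ∈
      Set.Ioo (cum PX (x k)) (cum PX (x k) + PX (x k))}

/-- the set of initial states whose `φ`-trajectory follows the symbol sequence `z`. -/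
def phiSet {c : ℕ} (PZ : Fin c → ℝ) (T1 : ℝ → ℝ) (n : ℕ) (z : ℕ → Fin c) : Set ℝ :=
  {φ | ∀ k < n, iterF (fun _ t => T1 t) k φ ∈
      Set.Ioo (cum PZ (z k)) (cum PZ (z k) + PZ (z k))}

lemma mem_thetaSet {a b : ℕ} {PX : Fin a → ℝ} {T0 : ℝ → Fin b → ℝ} {y : ℕ → Fin b}
    {n : ℕ} {x : ℕ → Fin a} {θ : ℝ} : θ ∈ thetaSet PX T0 y n x ↔
    ∀ k < n, iterF (fun k t => T0 t (y k)) k θ ∈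
      Set.Ioo (cum PX (x k)) (cum PX (x k) + PX (x k)) := Iff.rfl

lemma mem_phiSet {c : ℕ} {PZ : Fin c → ℝ} {T1 : ℝ → ℝ} {n : ℕ} {z : ℕ → Fin c} {φ : ℝ} :
    φ ∈ phiSet PZ T1 n z ↔ ∀ k < n, iterF (fun _ t => T1 t) k φ ∈
      Set.Ioo (cum PZ (z k)) (cum PZ (z k) + PZ (z k)) := Iff.rfl

section Theta

variable {a b : ℕ} {PXY : Fin a × Fin b → ℝ} {PX : Fin a → ℝ} {PY : Fin b → ℝ}
  {T0 : ℝ → Fin b → ℝ} {y : ℕ → Fin b} {n : ℕ}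
  (hPXY0 : ∀ q, 0 ≤ PXY q)
  (hPX0 : ∀ i, 0 ≤ PX i) (hPXsum : ∑ i, PX i = 1)
  (hPY : ∀ k, PY k = ∑ i, PXY (i, k))
  (hT0 : ∀ (k : Fin b) (i : Fin a), 0 < PX i →
      ∀ θ ∈ Set.Icc (cum PX i) (cum PX i + PX i),
        T0 θ k = (∑ i' ∈ Finset.univ.filter (fun i' => i' < i), PXY (i', k)) / PY k
          + (θ - cum PX i) * (PXY (i, k) / (PY k * PX i)))

include hPXY0 hPX0 hPY hT0 in
lemma thetaSet_Ioo (hPXsum : ∑ i, PX i = 1) (hn : 0 < n) (x : ℕ → Fin a) :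
    ∃ u w : ℝ, thetaSet PX T0 y n x = Set.Ioo u w := by
  set D : ℕ → ℝ → ℝ := iterF (fun k t => T0 t (y k)) with hD
  set C : ℕ → ℝ := fun k =>
    (∑ i' ∈ Finset.univ.filter (fun i' => i' < x k), PXY (i', y k)) / PY (y k) with hCd
  set d : ℕ → ℝ := fun k => cum PX (x k) with hdd
  set s : ℕ → ℝ := fun k => PXY (x k, y k) / (PY (y k) * PX (x k)) with hsd
  have hPY0 : ∀ m, 0 ≤ PY m := fun m => by
    rw [hPY]; exact Finset.sum_nonneg fun _ _ => hPXY0 _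
  have hs0 : ∀ k, 0 ≤ s k := fun k =>
    div_nonneg (hPXY0 _) (mul_nonneg (hPY0 _) (hPX0 _))
  have hAD : ∀ θ k, (∀ j < k, D j θ ∈ Set.Ioo (d j) (d j + PX (x j))) →
      D k θ = iterA C d s k θ := by
    intro θ k
    induction k with
    | zero => intro _; rfl
    | succ k ih =>
      intro hjs
      have hmem := hjs k (Nat.lt_succ_self k)
      have hpos : 0 < PX (x k) := by have := hmem.1; have := hmem.2; simp only [hdd] at *; linarith
      have hIH := ih (fun j hj => hjs j (by omega))
      rw [iterA_succ, ← hIH, hD, iterF_succ, ← hD]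
      exact hT0 (y k) (x k) hpos (D k θ) ⟨hmem.1.le, hmem.2.le⟩
  have hDA : ∀ θ k, (∀ j < k, iterA C d s j θ ∈ Set.Ioo (d j) (d j + PX (x j))) →
      D k θ = iterA C d s k θ := by
    intro θ k
    induction k with
    | zero => intro _; rfl
    | succ k ih =>
      intro hjs
      have hmem := hjs k (Nat.lt_succ_self k)
      have hpos : 0 < PX (x k) := by have := hmem.1; have := hmem.2; simp only [hdd] at *; linarith
      have hIH := ih (fun j hj => hjs j (by omega))
      rw [iterA_succ, hD, iterF_succ, ← hD, hIH]
      exact hT0 (y k) (x k) hpos (iterA C d s k θ) ⟨hmem.1.le, hmem.2.le⟩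
  have hset : thetaSet PX T0 y n x = {θ : ℝ | ∀ k < n,
      iterA C d s k θ ∈ Set.Ioo (d k) (d k + PX (x k))} := by
    ext θ
    rw [mem_thetaSet]
    constructor
    · intro h k hk
      rw [← hAD θ k (fun j hj => h j (by omega))]
      exact h k hk
    · intro h k hk
      have hEq := hDA θ k (fun j hj => h j (by omega))
      rw [hD] at hEq
      rw [hEq]
      exact h k hk
  rw [hset]
  refine exists_Ioo_of_open_ordConnected (pieceSet_open C d s _ _ n)
    (pieceSet_ordConnected C d s hs0 _ _ n) ?_
  intro θ hθ
  have h0' : θ ∈ Set.Ioo (d 0) (d 0 + PX (x 0)) := hθ 0 hn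
  exact piece_subset hPX0 hPXsum (x 0) h0'

include hPX0 in
lemma thetaSet_subset (hPXsum : ∑ i, PX i = 1) (hn : 0 < n) (x : ℕ → Fin a) :
    thetaSet PX T0 y n x ⊆ Set.Ioo 0 1 := by
  intro θ hθ
  have h0 := mem_thetaSet.mp hθ 0 hn
  rw [iterF_zero] at h0
  exact piece_subset hPX0 hPXsum (x 0) h0

include hPX0 in
lemma thetaSet_indices_eq {θ : ℝ} {x x' : ℕ → Fin a}
    (h : θ ∈ thetaSet PX T0 y n x) (h' : θ ∈ thetaSet PX T0 y n x') :
    ∀ k < n, x k = x' k := by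
  intro k hk
  exact index_eq hPX0 (mem_thetaSet.mp h k hk) (mem_thetaSet.mp h' k hk)

include hPXY0 hPX0 hPY hT0 in
lemma thetaSet_mono {θ θ' : ℝ} {x x' : ℕ → Fin a}
    (h : θ ∈ thetaSet PX T0 y n x) (h' : θ' ∈ thetaSet PX T0 y n x') (hle : θ ≤ θ') :
    ∀ k ≤ n, iterF (fun k t => T0 t (y k)) k θ ≤ iterF (fun k t => T0 t (y k)) k θ' := by
  intro k
  induction k with
  | zero => intro _; rw [iterF_zero, iterF_zero]; exact hle
  | succ k ih =>
    intro hk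
    have hkn : k < n := hk
    have h1 := mem_thetaSet.mp h k hkn
    have h2 := mem_thetaSet.mp h' k hkn
    have p1 : 0 < PX (x k) := by have := h1.1; have := h1.2; linarith
    have p2 : 0 < PX (x' k) := by have := h2.1; have := h2.2; linarith
    rw [iterF_succ, iterF_succ]
    exact T0_mono PXY hPXY0 PX hPX0 PY hPY T0 hT0 (y k) p1 p2
      ⟨h1.1.le, h1.2.le⟩ ⟨h2.1.le, h2.2.le⟩ (ih (by omega))

include hPXY0 hPX0 hPY hT0 in
lemma thetaSet_indices_le {θ θ' : ℝ} {x x' : ℕ → Fin a}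
    (h : θ ∈ thetaSet PX T0 y n x) (h' : θ' ∈ thetaSet PX T0 y n x') (hle : θ ≤ θ') :
    ∀ k < n, x k ≤ x' k := by
  intro k hk
  exact index_le hPX0 (mem_thetaSet.mp h k hk) (mem_thetaSet.mp h' k hk)
    (thetaSet_mono hPXY0 hPX0 hPY hT0 h h' hle k hk.le)

end Theta

section Phi

variable {c : ℕ} {PZ : Fin c → ℝ} {T1 : ℝ → ℝ} {n : ℕ}
  (hPZ0 : ∀ j, 0 ≤ PZ j) (hPZ1 : ∑ j, PZ j = 1)
  (hT1 : ∀ j : Fin c, ∀ φ ∈ Set.Ioo (cum PZ j) (cum PZ j + PZ j),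
      T1 φ = (φ - cum PZ j) / PZ j)

include hPZ0 hPZ1 hT1 in
lemma phiSet_Ioo (hn : 0 < n) (z : ℕ → Fin c) :
    ∃ u w : ℝ, phiSet PZ T1 n z = Set.Ioo u w := by
  set E : ℕ → ℝ → ℝ := iterF (fun _ t => T1 t) with hE
  set C : ℕ → ℝ := fun _ => (0 : ℝ) with hCd
  set d : ℕ → ℝ := fun k => cum PZ (z k) with hdd
  set s : ℕ → ℝ := fun k => 1 / PZ (z k) with hsd
  have hs0 : ∀ k, 0 ≤ s k := fun k => one_div_nonneg.mpr (hPZ0 _)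
  have hstep : ∀ k t, t ∈ Set.Ioo (d k) (d k + PZ (z k)) → T1 t = C k + (t - d k) * s k := by
    intro k t htm
    rw [hT1 (z k) t htm]
    simp only [hCd, hsd, hdd]
    rw [mul_one_div]
    ring
  have hAD : ∀ φ k, (∀ j < k, E j φ ∈ Set.Ioo (d j) (d j + PZ (z j))) →
      E k φ = iterA C d s k φ := by
    intro φ k
    induction k with
    | zero => intro _; rfl
    | succ k ih =>
      intro hjs
      have hmem := hjs k (Nat.lt_succ_self k)
      have hIH := ih (fun j hj => hjs j (by omega))
      rw [iterA_succ, ← hIH, hE, iterF_succ, ← hE]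
      exact hstep k (E k φ) hmem
  have hDA : ∀ φ k, (∀ j < k, iterA C d s j φ ∈ Set.Ioo (d j) (d j + PZ (z j))) →
      E k φ = iterA C d s k φ := by
    intro φ k
    induction k with
    | zero => intro _; rfl
    | succ k ih =>
      intro hjs
      have hmem := hjs k (Nat.lt_succ_self k)
      have hIH := ih (fun j hj => hjs j (by omega))
      rw [iterA_succ, hE, iterF_succ, ← hE, hIH]
      exact hstep k (iterA C d s k φ) hmem
  have hset : phiSet PZ T1 n z = {φ : ℝ | ∀ k < n,
      iterA C d s k φ ∈ Set.Ioo (d k) (d k + PZ (z k))} := by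
    ext φ
    rw [mem_phiSet]
    constructor
    · intro h k hk
      rw [← hAD φ k (fun j hj => h j (by omega))]
      exact h k hk
    · intro h k hk
      have hEq := hDA φ k (fun j hj => h j (by omega))
      rw [hE] at hEq
      rw [hEq]
      exact h k hk
  rw [hset]
  refine exists_Ioo_of_open_ordConnected (pieceSet_open C d s _ _ n)
    (pieceSet_ordConnected C d s hs0 _ _ n) ?_
  intro φ hφ
  have h0' : φ ∈ Set.Ioo (d 0) (d 0 + PZ (z 0)) := hφ 0 hn
  exact piece_subset hPZ0 hPZ1 (z 0) h0'

include hPZ0 hPZ1 in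
lemma phiSet_subset (hn : 0 < n) (z : ℕ → Fin c) : phiSet PZ T1 n z ⊆ Set.Ioo 0 1 := by
  intro φ hφ
  have h0 := mem_phiSet.mp hφ 0 hn
  rw [iterF_zero] at h0
  exact piece_subset hPZ0 hPZ1 (z 0) h0

include hPZ0 in
lemma phiSet_indices_eq {φ : ℝ} {z z' : ℕ → Fin c}
    (h : φ ∈ phiSet PZ T1 n z) (h' : φ ∈ phiSet PZ T1 n z') :
    ∀ k < n, z k = z' k := by
  intro k hk
  exact index_eq hPZ0 (mem_phiSet.mp h k hk) (mem_phiSet.mp h' k hk)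

end Phi

/-- extension of a finite word to an infinite one -/
def extF {α : Sort*} {n : ℕ} (hn : 0 < n) (v : Fin n → α) : ℕ → α :=
  fun k => if h : k < n then v ⟨k, h⟩ else v ⟨0, hn⟩

lemma extF_lt {α : Sort*} {n : ℕ} (hn : 0 < n) (v : Fin n → α) (k : ℕ) (hk : k < n) :
    extF hn v k = v ⟨k, hk⟩ := dif_pos hk

lemma extF_coe {α : Sort*} {n : ℕ} (hn : 0 < n) (v : Fin n → α) (k : Fin n) :
    extF hn v (k : ℕ) = v k := by
  rw [extF_lt hn v k.1 k.2]


set_option maxHeartbeats 1000000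

/-- Lemma 2 of the paper: for every `n ≥ 1` and every source word `y^n`, the fundamental set
`u_n(y^n)` is (up to a Lebesgue-null set) a finite disjoint union of open rectangles
`I r ×ˢ J r` contained in the unit square, whose distinct `θ`-axis projection intervals `I r`
number at most `n(|𝒳| - 1) + 1`. -/
theorem stmt_6
    {a b c : ℕ}
    (PXY : Fin a × Fin b → ℝ)
    (hPXY0 : ∀ q, 0 ≤ PXY q) (hPXY1 : ∑ q : Fin a × Fin b, PXY q = 1)
    (PX : Fin a → ℝ) (hPX : ∀ i, PX i = ∑ k, PXY (i, k))
    (PY : Fin b → ℝ) (hPY : ∀ k, PY k = ∑ i, PXY (i, k))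
    (PZ : Fin c → ℝ) (hPZ0 : ∀ j, 0 ≤ PZ j) (hPZ1 : ∑ j, PZ j = 1)
    (ξ : Fin a × Fin c → Fin b)
    (hξ : ∀ i k, ∑ j ∈ Finset.univ.filter (fun j => ξ (i, j) = k), PX i * PZ j = PXY (i, k))
    (T0 : ℝ → Fin b → ℝ)
    (hT0 : ∀ (k : Fin b) (i : Fin a), 0 < PX i →
      ∀ θ ∈ Set.Icc (cum PX i) (cum PX i + PX i),
        T0 θ k = (∑ i' ∈ Finset.univ.filter (fun i' => i' < i), PXY (i', k)) / PY k
          + (θ - cum PX i) * (PXY (i, k) / (PY k * PX i)))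
    (T1 : ℝ → ℝ)
    (hT1 : ∀ j : Fin c, ∀ φ ∈ Set.Ioo (cum PZ j) (cum PZ j + PZ j),
      T1 φ = (φ - cum PZ j) / PZ j)
    :
    ∀ (n : ℕ), 1 ≤ n → ∀ (y : ℕ → Fin b),
      ∃ (N : ℕ) (I J : Fin N → Set ℝ),
        (∀ r, ∃ u v : ℝ, I r = Set.Ioo u v) ∧
        (∀ r, ∃ u v : ℝ, J r = Set.Ioo u v) ∧
        (∀ r, I r ⊆ Set.Ioo 0 1) ∧ (∀ r, J r ⊆ Set.Ioo 0 1) ∧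
        (∀ r s, r ≠ s → Disjoint (I r ×ˢ J r) (I s ×ˢ J s)) ∧
        MeasureTheory.volume (symmDiff (⋃ r, I r ×ˢ J r) (fund PX PZ ξ T0 T1 n y)) = 0 ∧
        (Set.range I).ncard ≤ n * (a - 1) + 1 := by
  intro n hn y
  classical
  have hn0 : 0 < n := hn
  have ha : 1 ≤ a := by
    rcases Nat.eq_zero_or_pos a with h | h
    · subst h; simp at hPXY1
    · exact h
  have hPX0 : ∀ i, 0 ≤ PX i := fun i => by
    rw [hPX]; exact Finset.sum_nonneg fun _ _ => hPXY0 _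
  have hPXsum : ∑ i, PX i = 1 := by
    simp_rw [hPX]; rw [← Fintype.sum_prod_type]; exact hPXY1
  -- the admissible pairs
  set 𝒮 : Finset ((Fin n → Fin a) × (Fin n → Fin c)) :=
    Finset.univ.filter (fun p => (∀ k : Fin n, ξ (p.1 k, p.2 k) = y (k : ℕ)) ∧
      (thetaSet PX T0 y n (extF hn0 p.1)).Nonempty ∧
      (phiSet PZ T1 n (extF hn0 p.2)).Nonempty) with h𝒮
  -- fundamental set decomposition
  have hfund : fund PX PZ ξ T0 T1 n y =
      ⋃ p ∈ 𝒮, (thetaSet PX T0 y n (extF hn0 p.1) ×ˢ phiSet PZ T1 n (extF hn0 p.2)) := by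
    ext q
    simp only [fund, traj, Set.mem_setOf_eq, Set.mem_iUnion, exists_prop]
    constructor
    · rintro ⟨θs, φs, xs, zs, h0, h1, h2⟩
      have hDθ : ∀ k, k ≤ n → iterF (fun k t => T0 t (y k)) k q.1 = θs k := by
        intro k
        induction k with
        | zero => intro _; rw [iterF_zero, h0]
        | succ k ih =>
          intro hk
          rw [iterF_succ, ih (by omega)]
          exact ((h2 k (by omega)).2.2.2.1).symm
      have hEφ : ∀ k, k ≤ n → iterF (fun _ t => T1 t) k q.2 = φs k := by
        intro k
        induction k with
        | zero => intro _; rw [iterF_zero, h1]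
        | succ k ih =>
          intro hk
          rw [iterF_succ, ih (by omega)]
          exact ((h2 k (by omega)).2.2.2.2).symm
      have hq1 : q.1 ∈ thetaSet PX T0 y n (extF hn0 (fun k : Fin n => xs (k : ℕ))) := by
        refine mem_thetaSet.mpr fun k hk => ?_
        rw [hDθ k hk.le, extF_lt hn0 _ k hk]
        exact (h2 k hk).1
      have hq2 : q.2 ∈ phiSet PZ T1 n (extF hn0 (fun k : Fin n => zs (k : ℕ))) := by
        refine mem_phiSet.mpr fun k hk => ?_
        rw [hEφ k hk.le, extF_lt hn0 _ k hk]
        exact (h2 k hk).2.1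
      refine ⟨(fun k : Fin n => xs (k : ℕ), fun k : Fin n => zs (k : ℕ)), ?_, hq1, hq2⟩
      rw [h𝒮, Finset.mem_filter]
      exact ⟨Finset.mem_univ _, fun k => (h2 k k.2).2.2.1, ⟨q.1, hq1⟩, ⟨q.2, hq2⟩⟩
    · rintro ⟨p, hp, hq1, hq2⟩
      rw [h𝒮, Finset.mem_filter] at hp
      obtain ⟨-, hcompat, -, -⟩ := hp
      refine ⟨fun k => iterF (fun k t => T0 t (y k)) k q.1,
        fun k => iterF (fun _ t => T1 t) k q.2, extF hn0 p.1, extF hn0 p.2,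
        iterF_zero _ _, iterF_zero _ _, fun k hk => ?_⟩
      refine ⟨mem_thetaSet.mp hq1 k hk, mem_phiSet.mp hq2 k hk, ?_,
        iterF_succ _ _ _, iterF_succ _ _ _⟩
      rw [extF_lt hn0 _ k hk, extF_lt hn0 _ k hk]
      exact hcompat ⟨k, hk⟩
  -- the chain bound
  have hchain : {v : Fin n → Fin a | (thetaSet PX T0 y n (extF hn0 v)).Nonempty}.ncard
      ≤ n * (a - 1) + 1 := by
    refine chain_card ha _ ?_
    rintro v ⟨θ, hθ⟩ w ⟨θ', hθ'⟩
    rcases le_total θ θ' with h | h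
    · left
      intro k
      have := thetaSet_indices_le hPXY0 hPX0 hPY hT0 hθ hθ' h k k.2
      rwa [extF_coe, extF_coe] at this
    · right
      intro k
      have := thetaSet_indices_le hPXY0 hPX0 hPY hT0 hθ' hθ h k k.2
      rwa [extF_coe, extF_coe] at this
  -- indexing
  set e : Fin (Fintype.card {p // p ∈ 𝒮}) ≃ {p // p ∈ 𝒮} :=
    (Fintype.equivFin {p // p ∈ 𝒮}).symm with he
  refine ⟨Fintype.card {p // p ∈ 𝒮},
    fun r => thetaSet PX T0 y n (extF hn0 ((e r).1.1)),
    fun r => phiSet PZ T1 n (extF hn0 ((e r).1.2)),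
    fun r => thetaSet_Ioo hPXY0 hPX0 hPY hT0 hPXsum hn0 _,
    fun r => phiSet_Ioo hPZ0 hPZ1 hT1 hn0 _,
    fun r => thetaSet_subset hPX0 hPXsum hn0 _,
    fun r => phiSet_subset hPZ0 hPZ1 hn0 _, ?_, ?_, ?_⟩
  · -- disjointness
    intro r s hrs
    have hps : (e r).1 ≠ (e s).1 := by
      intro h
      exact hrs (e.injective (Subtype.ext h))
    by_cases h1 : (e r).1.1 = (e s).1.1
    · have h2 : (e r).1.2 ≠ (e s).1.2 := fun h2 => hps (Prod.ext h1 h2)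
      rw [Set.disjoint_left]
      rintro ⟨qθ, qφ⟩ ⟨hqa, hqb⟩ ⟨hqc, hqd⟩
      refine h2 (funext fun k => ?_)
      have := phiSet_indices_eq hPZ0 hqb hqd (k : ℕ) k.2
      rwa [extF_coe, extF_coe] at this
    · rw [Set.disjoint_left]
      rintro ⟨qθ, qφ⟩ ⟨hqa, hqb⟩ ⟨hqc, hqd⟩
      refine h1 (funext fun k => ?_)
      have := thetaSet_indices_eq hPX0 hqa hqc (k : ℕ) k.2
      rwa [extF_coe, extF_coe] at this
  · -- measure of the symmetric difference
    have hU : (⋃ r, thetaSet PX T0 y n (extF hn0 ((e r).1.1)) ×ˢ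
        phiSet PZ T1 n (extF hn0 ((e r).1.2))) = fund PX PZ ξ T0 T1 n y := by
      rw [hfund]
      ext q
      simp only [Set.mem_iUnion, exists_prop]
      constructor
      · rintro ⟨r, hr⟩
        exact ⟨(e r).1, (e r).2, hr⟩
      · rintro ⟨p, hp, hq⟩
        refine ⟨e.symm ⟨p, hp⟩, ?_⟩
        rw [Equiv.apply_symm_apply]
        exact hq
    rw [hU, symmDiff_self]
    simp
  · -- cardinality bound
    have hsub : Set.range (fun r => thetaSet PX T0 y n (extF hn0 ((e r).1.1)))
        ⊆ (fun v => thetaSet PX T0 y n (extF hn0 v)) ''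
          {v : Fin n → Fin a | (thetaSet PX T0 y n (extF hn0 v)).Nonempty} := by
      rintro _ ⟨r, rfl⟩
      have hmem := Finset.mem_filter.mp (e r).2
      exact ⟨(e r).1.1, hmem.2.2.1, rfl⟩
    calc (Set.range fun r => thetaSet PX T0 y n (extF hn0 ((e r).1.1))).ncard
        ≤ ((fun v => thetaSet PX T0 y n (extF hn0 v)) ''
            {v : Fin n → Fin a | (thetaSet PX T0 y n (extF hn0 v)).Nonempty}).ncard :=
          Set.ncard_le_ncard hsub ((Set.toFinite _).image _)
      _ ≤ {v : Fin n → Fin a | (thetaSet PX T0 y n (extF hn0 v)).Nonempty}.ncard :=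
          Set.ncard_image_le (Set.toFinite _)
      _ ≤ n * (a - 1) + 1 := hchain
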